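/- Let G be a group, H a subgroup of G, (f_k : G → ℝ)_{k∈ℕ} a family of functions, and (D_k)_{k∈ℕ} nonnegative reals with D_k → 0, such that |f_k(gh) − f_k(g) − f_k(h)| ≤ D_k for all g, h ∈ G and all k. Suppose Cal : H → ℝ is a group homomorphism such that for every h ∈ H, f_k(h) → Cal(h) as k → ∞. Then there exists a group homomorphism C : G → ℝ with C(h) = Cal(h) for all h ∈ H. -/

import Mathlib

open Filter

/-- The subspace of real sequences tending to zero. -/
def c0 : Submodule ℝ (ℕ → ℝ) where
  carrier := {v | Tendsto v atTop (nhds 0)}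
  add_mem' := by
    intro a b ha hb
    have := ha.add hb
    rw [add_zero] at this
    exact this
  zero_mem' := tendsto_const_nhds
  smul_mem' := by
    intro c v hv
    have := hv.const_smul c
    rw [smul_zero] at this
    exact this

/-- If the `f k : G → ℝ` have defects `D k → 0` and converge pointwise on a
subgroup `H` to a homomorphism `Cal : H → ℝ`, then `Cal` extends to a group homomorphism
`C : G → ℝ`. -/
theorem calabi_extends {G : Type*} [Group G] (H : Subgroup G)
    (f : ℕ → G → ℝ) (D : ℕ → ℝ)
    (hD0 : ∀ k, 0 ≤ D k) (hDlim : Tendsto D atTop (nhds 0))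
    (hdef : ∀ k : ℕ, ∀ g h : G, |f k (g * h) - f k g - f k h| ≤ D k)
    (Cal : H → ℝ) (hCal : ∀ a b : H, Cal (a * b) = Cal a + Cal b)
    (hconv : ∀ h : H, Tendsto (fun k => f k (h : G)) atTop (nhds (Cal h))) :
    ∃ C : G → ℝ, (∀ a b : G, C (a * b) = C a + C b) ∧ ∀ h : H, C (h : G) = Cal h := by
  -- the embedding of ℝ as constant sequences into the quotient by c0
  set ι : ℝ →ₗ[ℝ] (ℕ → ℝ) ⧸ c0 :=
    c0.mkQ.comp (LinearMap.toSpanSingleton ℝ (ℕ → ℝ) 1) with hι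
  have hinj : Function.Injective ι := by
    intro r s hrs
    have hm : (r • (1 : ℕ → ℝ) - s • (1 : ℕ → ℝ)) ∈ c0 :=
      (Submodule.Quotient.eq _).mp (by simpa [hι, Submodule.mkQ_apply] using hrs)
    have h2 : Tendsto (fun _ : ℕ => r - s) atTop (nhds 0) := by
      have := hm
      simp only [c0, Submodule.mem_mk, AddSubmonoid.mem_mk, AddSubsemigroup.mem_mk,
        Set.mem_setOf_eq] at this
      convert this using 2
      simp
    have := tendsto_nhds_unique h2 tendsto_const_nhds
    linarith
  obtain ⟨ψ, hψ⟩ := LinearMap.exists_leftInverse_of_injective ι (LinearMap.ker_eq_bot.mpr hinj)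
  have hψ' : ∀ r : ℝ, ψ (ι r) = r := fun r => by
    have := LinearMap.congr_fun hψ r
    simpa using this
  -- key: for h ∈ H, the class of (f k h) equals ι (Cal h)
  have key : ∀ h : H, c0.mkQ (fun k => f k (h : G)) = ι (Cal h) := by
    intro h
    rw [hι]
    simp only [LinearMap.comp_apply, LinearMap.toSpanSingleton_apply]
    rw [Submodule.mkQ_apply, Submodule.mkQ_apply, Submodule.Quotient.eq]
    show Tendsto (fun k => f k (h : G) - Cal h • 1) atTop (nhds 0)
    simpa using (hconv h).sub_const (Cal h)
  refine ⟨fun g => ψ (c0.mkQ (fun k => f k g)), ?_, ?_⟩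
  · intro a b
    show ψ (c0.mkQ fun k => f k (a * b)) = ψ (c0.mkQ fun k => f k a) + ψ (c0.mkQ fun k => f k b)
    rw [← map_add, ← map_add]
    congr 1
    rw [Submodule.mkQ_apply, Submodule.mkQ_apply, Submodule.Quotient.eq]
    show Tendsto (fun k => f k (a * b) - (f k a + f k b)) atTop (nhds 0)
    have h1 : Tendsto (fun k => |f k (a * b) - f k a - f k b|) atTop (nhds 0) := by
      apply squeeze_zero (fun k => abs_nonneg _) (fun k => hdef k a b) hDlim
    have h2 := tendsto_zero_iff_abs_tendsto_zero
      (f := fun k => f k (a * b) - f k a - f k b) |>.mpr h1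
    convert h2 using 2 with k
    ring
  · intro h
    show ψ (c0.mkQ fun k => f k (h : G)) = Cal h
    rw [key h, hψ']
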